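/- Let D = diag(d₁,d₂,d₃) be a diagonal real 3×3 matrix with d₁ ⩾ d₂ ⩾ |d₃|. Then for every B ∈ SO₃(ℝ), Tr(B D) ⩽ Tr(D), i.e. the maximum of B·D over B ∈ SO₃(ℝ) (for the inner product A·B = ½Tr(ABᵀ)) is attained at B = I₃. -/

import Mathlib

set_option maxHeartbeats 800000


open Matrix

/-- The space of `3 × 3` real matrices. -/
abbrev Mat3 := Matrix (Fin 3) (Fin 3) ℝ

/-- `SO₃(ℝ)`: real `3 × 3` matrices with `AᵀA = I₃` and `det A = 1`. -/
def SO3 : Set Mat3 := {A | Aᵀ * A = 1 ∧ A.det = 1}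

/-- If `D = diag(d₁,d₂,d₃)` with `d₁ ⩾ d₂ ⩾ |d₃|`, then for every `B ∈ SO₃(ℝ)` we have
`Tr(BD) ⩽ Tr(D)`: the maximum of `B·D` over `SO₃(ℝ)` is attained at `B = I₃`. -/
theorem trace_mul_diagonal_le (d : Fin 3 → ℝ) (hd1 : d 1 ≤ d 0) (hd2 : |d 2| ≤ d 1) :
    ∀ B ∈ SO3, (B * Matrix.diagonal d).trace ≤ (Matrix.diagonal d).trace := by
  rintro B ⟨horth, hdet⟩
  have hBinv : B⁻¹ = Bᵀ := Matrix.inv_eq_left_inv horth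
  have hadj : B.adjugate = Bᵀ := by
    rw [← hBinv, Matrix.inv_def, hdet]
    simp
  have horth' : B * Bᵀ = 1 := mul_eq_one_comm.mpr horth
  -- entry names
  set a := B 0 0 with ha; set b := B 0 1 with hb; set c := B 0 2 with hc
  set d' := B 1 0 with hd'; set e := B 1 1 with he; set f := B 1 2 with hf
  set g := B 2 0 with hg; set h := B 2 1 with hh; set i := B 2 2 with hi
  -- row norms from B * Bᵀ = 1
  have hr0 : a * a + b * b + c * c = 1 := by
    have := congrFun (congrFun horth' 0) 0
    simpa [Matrix.mul_apply, Fin.sum_univ_three, Matrix.one_apply] using this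
  have hr1 : d' * d' + e * e + f * f = 1 := by
    have := congrFun (congrFun horth' 1) 1
    simpa [Matrix.mul_apply, Fin.sum_univ_three, Matrix.one_apply] using this
  have hr2 : g * g + h * h + i * i = 1 := by
    have := congrFun (congrFun horth' 2) 2
    simpa [Matrix.mul_apply, Fin.sum_univ_three, Matrix.one_apply] using this
  -- cofactor identities from adjugate B = Bᵀ
  rw [Matrix.adjugate_fin_three] at hadj
  have hca : e * i - f * h = a := by
    have := congrFun (congrFun hadj 0) 0
    simpa [Matrix.transpose_apply] using this
  have hce : a * i - c * g = e := by
    have := congrFun (congrFun hadj 1) 1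
    simpa [Matrix.transpose_apply] using this
  have hci : a * e - b * d' = i := by
    have := congrFun (congrFun hadj 2) 2
    simpa [Matrix.transpose_apply] using this
  clear hadj horth horth' hBinv hdet
  -- diagonal entries are ≤ 1
  have hA1 : a ≤ 1 := by nlinarith [sq_nonneg b, sq_nonneg c, sq_nonneg (a - 1)]
  have hE1 : e ≤ 1 := by nlinarith [sq_nonneg d', sq_nonneg f, sq_nonneg (e - 1)]
  have hI1 : i ≤ 1 := by nlinarith [sq_nonneg g, sq_nonneg h, sq_nonneg (i - 1)]
  -- the SOS identity: 4(1 - a - e + i) = (d'-b)² + (c+g)² + (f+h)² + (1-a-e+i)²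
  have key : (d' - b) ^ 2 + (c + g) ^ 2 + (f + h) ^ 2 + (1 - a - e + i) ^ 2
      = 4 * (1 - a - e + i) := by
    linear_combination hr0 + hr1 + hr2 + 2 * hci - 2 * hce - 2 * hca
  have hAEI : a + e - i ≤ 1 := by
    linarith [key, sq_nonneg (d' - b), sq_nonneg (c + g), sq_nonneg (f + h),
      sq_nonneg (1 - a - e + i)]
  -- compute the traces
  have ht1 : (B * Matrix.diagonal d).trace = a * d 0 + e * d 1 + i * d 2 := by
    simp [Matrix.trace, Matrix.diag, Fin.sum_univ_three]
    rfl
  have ht2 : (Matrix.diagonal d).trace = d 0 + d 1 + d 2 := by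
    simp [Matrix.trace, Matrix.diag, Fin.sum_univ_three]
  rw [ht1, ht2]
  have habs1 : d 2 ≤ d 1 := (abs_le.mp hd2).2
  have habs2 : -d 1 ≤ d 2 := (abs_le.mp hd2).1
  rcases le_or_gt 0 (d 2) with hs | hs
  · linarith [mul_nonneg (sub_nonneg.mpr hd1) (sub_nonneg.mpr hA1),
      mul_nonneg (sub_nonneg.mpr habs1) (by linarith : (0:ℝ) ≤ 2 - a - e),
      mul_nonneg hs (by linarith : (0:ℝ) ≤ 3 - a - e - i)]
  · linarith [mul_nonneg (sub_nonneg.mpr hd1) (sub_nonneg.mpr hA1),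
      mul_nonneg (by linarith : (0:ℝ) ≤ d 1 + d 2) (by linarith : (0:ℝ) ≤ 2 - a - e),
      mul_nonneg (by linarith : (0:ℝ) ≤ -d 2) (by linarith : (0:ℝ) ≤ 1 - a - e + i)]
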